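/- Let W and T be real n×n matrices that are both symmetric positive definite, and let μ_min > 0 and μ_max be the smallest and largest eigenvalues of S = W^{-1/2} T W^{-1/2}. If α > (1/μ_min - μ_min)/2 and β > (μ_max - 1/μ_max)/2 with α, β > 0, then ρ(G_{α,β}) < 1. -/

import Mathlib

open Matrix

section OldSqrt

open scoped ComplexOrder

/-- The square root of a positive semidefinite matrix, as defined in the older Mathlib
(`Matrix.PosSemidef.sqrt`, removed since). -/
noncomputable def Matrix.PosSemidef.sqrt {n : Type*} [Fintype n] [DecidableEq n] {𝕜 : Type*} [RCLike 𝕜]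
    {A : Matrix n n 𝕜} (hA : A.PosSemidef) : Matrix n n 𝕜 :=
  hA.1.eigenvectorUnitary.1 * diagonal (RCLike.ofReal ∘ (Real.sqrt ∘ hA.1.eigenvalues)) *
    (star hA.1.eigenvectorUnitary : Matrix n n 𝕜)

end OldSqrt

lemma oldSqrt_mul_self {n : ℕ} {A : Matrix (Fin n) (Fin n) ℝ} (hA : A.PosSemidef) :
    hA.sqrt * hA.sqrt = A := by
  have hU2 : (star hA.1.eigenvectorUnitary : Matrix (Fin n) (Fin n) ℝ) * hA.1.eigenvectorUnitary.1 = 1 :=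
    mem_unitaryGroup_iff'.mp hA.1.eigenvectorUnitary.2
  have hsp := hA.1.spectral_theorem
  unfold Matrix.PosSemidef.sqrt
  calc _ = hA.1.eigenvectorUnitary.1 * (diagonal (RCLike.ofReal ∘ (Real.sqrt ∘ hA.1.eigenvalues)) *
        ((star hA.1.eigenvectorUnitary : Matrix (Fin n) (Fin n) ℝ) * hA.1.eigenvectorUnitary.1) *
        diagonal (RCLike.ofReal ∘ (Real.sqrt ∘ hA.1.eigenvalues))) *
        (star hA.1.eigenvectorUnitary : Matrix (Fin n) (Fin n) ℝ) := by
        simp only [Matrix.mul_assoc]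
    _ = A := by
        rw [hU2, Matrix.mul_one, diagonal_mul_diagonal]
        have : (fun i => (RCLike.ofReal ∘ (Real.sqrt ∘ hA.1.eigenvalues)) i * (RCLike.ofReal ∘ (Real.sqrt ∘ hA.1.eigenvalues)) i : Fin n → ℝ)
            = (RCLike.ofReal ∘ hA.1.eigenvalues) := funext fun i => by
          simp [Real.mul_self_sqrt (hA.eigenvalues_nonneg i)]
        rw [this]
        conv_rhs => rw [hsp, Unitary.conjStarAlgAut_apply]

lemma abs_key_lt_one (μ α β : ℝ) (hμ : 0 < μ) (hα : 0 < α) (hβ : 0 < β)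
    (hp : 0 < μ^2 + 2*α*μ - 1) (hq : 0 < 1 + 2*β*μ - μ^2) :
    |(1 + β*μ)⁻¹ * (μ - β) * (α + μ)⁻¹ * (1 - α*μ)| < 1 := by
  have hd1 : 0 < 1 + β*μ := by positivity
  have hd3 : 0 < α + μ := by positivity
  have hden : 0 < (1+β*μ)*(α+μ) := by positivity
  have h1 : 0 < (μ^2+2*α*μ-1)*(1+2*β*μ-μ^2) + (μ^2-1)^2 + 4*μ^2 := by
    nlinarith [mul_pos hp hq, sq_nonneg (μ^2-1), sq_nonneg μ]
  have h2 : 0 < (α+β)*(1+μ^2) := by positivity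
  have hid : 2*μ*(((1+β*μ)*(α+μ))^2 - ((μ-β)*(1-α*μ))^2)
      = ((μ^2+2*α*μ-1)*(1+2*β*μ-μ^2) + (μ^2-1)^2 + 4*μ^2) * ((α+β)*(1+μ^2)) := by ring
  have h3 : 0 < 2*μ*(((1+β*μ)*(α+μ))^2 - ((μ-β)*(1-α*μ))^2) := by
    rw [hid]; exact mul_pos h1 h2
  have hnum : ((μ-β)*(1-α*μ))^2 < ((1+β*μ)*(α+μ))^2 := by nlinarith [h3, hμ]
  have heq : (1 + β*μ)⁻¹ * (μ - β) * (α + μ)⁻¹ * (1 - α*μ)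
      = ((μ-β)*(1-α*μ)) / ((1+β*μ)*(α+μ)) := by field_simp
  rw [heq, abs_div, abs_of_pos hden, div_lt_one hden]
  nlinarith [sq_abs ((μ-β)*(1-α*μ)), abs_nonneg ((μ-β)*(1-α*μ)), hnum, hden]

/-- **Corollary 1.** If both `W` and `T` are symmetric positive definite and `μmin > 0`,
`μmax` are the extreme eigenvalues of `S = W^{-1/2} T W^{-1/2}`, then
`α > (1/μmin - μmin)/2` and `β > (μmax - 1/μmax)/2` (with `α, β > 0`) imply that the
spectral radius of the TTSCSP iteration matrix is less than one. -/
theorem ttscsp_convergence_cor1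
    {n : ℕ} (hn : 0 < n)
    (W T : Matrix (Fin n) (Fin n) ℝ)
    (hW : W.PosDef) (hT : T.PosDef)
    (S : Matrix (Fin n) (Fin n) ℝ)
    (hSdef : S = (hW.posSemidef.sqrt)⁻¹ * T * (hW.posSemidef.sqrt)⁻¹)
    (hS : S.IsHermitian)
    (μmin μmax : ℝ)
    (hμmin : μmin = ⨅ i, hS.eigenvalues i)
    (hμmax : μmax = ⨆ i, hS.eigenvalues i)
    (hμminpos : 0 < μmin)
    (α β : ℝ) (hα : 0 < α) (hβ : 0 < β)
    (hαlow : (1 / μmin - μmin) / 2 < α)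
    (hβlow : (μmax - 1 / μmax) / 2 < β) :
    spectralRadius ℂ
      (((W + β • T)⁻¹ * (T - β • W) * (α • W + T)⁻¹ * (W - α • T)).map Complex.ofReal) < 1 := by
  classical
  set R := hW.posSemidef.sqrt with hRdef
  have hRR : R * R = W := oldSqrt_mul_self hW.posSemidef
  have hRdet : IsUnit R.det := by
    have h : R.det * R.det = W.det := by rw [← det_mul, hRR]
    have := hW.det_pos
    exact isUnit_iff_ne_zero.mpr (fun h0 => by simp [h0] at h; nlinarith)
  have hRi : R⁻¹ * R = 1 := nonsing_inv_mul R hRdet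
  have hRi' : R * R⁻¹ = 1 := mul_nonsing_inv R hRdet
  set U : Matrix (Fin n) (Fin n) ℝ := (hS.eigenvectorUnitary : Matrix (Fin n) (Fin n) ℝ) with hUdef
  have hU1 : U * star U = 1 := mem_unitaryGroup_iff.mp hS.eigenvectorUnitary.2
  have hU2 : star U * U = 1 := mem_unitaryGroup_iff'.mp hS.eigenvectorUnitary.2
  set ev : Fin n → ℝ := hS.eigenvalues with hevdef
  have hSpec : S = U * diagonal ev * star U := by simpa using hS.spectral_theorem
  have hTeq : T = R * U * diagonal ev * star U * R := by
    have h : R * S * R = T := by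
      rw [hSdef]
      calc R * (R⁻¹ * T * R⁻¹) * R = (R * R⁻¹) * T * (R⁻¹ * R) := by
            simp only [Matrix.mul_assoc]
        _ = T := by rw [hRi', hRi, one_mul, mul_one]
    rw [← h, hSpec]; simp only [Matrix.mul_assoc]
  have hWeq : W = R * U * star U * R := by
    rw [mul_assoc R U (star U), hU1, mul_one, hRR]
  -- eigenvalue bounds
  have hevlb : ∀ i, μmin ≤ ev i := fun i => by
    rw [hμmin]; exact ciInf_le (Set.Finite.bddBelow (Set.finite_range _)) i
  have hevub : ∀ i, ev i ≤ μmax := fun i => by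
    rw [hμmax]; exact le_ciSup (Set.Finite.bddAbove (Set.finite_range _)) i
  have hevpos : ∀ i, 0 < ev i := fun i => lt_of_lt_of_le hμminpos (hevlb i)
  have hμmaxpos : 0 < μmax :=
    lt_of_lt_of_le hμminpos ((hevlb ⟨0, hn⟩).trans (hevub ⟨0, hn⟩))
  have h2 : 1 < (2*α + μmin) * μmin := by
    have h1 : 1/μmin < 2*α + μmin := by linarith
    exact (div_lt_iff₀ hμminpos).mp h1
  have h4 : μmax^2 - 1 < 2*β*μmax := by
    have h3 : μmax - 1/μmax < 2*β := by linarith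
    have h5 := mul_lt_mul_of_pos_right h3 hμmaxpos
    have h6 : (μmax - 1/μmax)*μmax = μmax^2 - 1 := by
      field_simp
    rw [h6] at h5
    linarith
  have hp : ∀ i, 0 < (ev i)^2 + 2*α*(ev i) - 1 := by
    intro i
    have key := mul_nonneg (sub_nonneg.mpr (hevlb i))
      (show (0:ℝ) ≤ ev i + μmin + 2*α by nlinarith [hevpos i, hμminpos, hα])
    nlinarith [h2, key]
  have hq : ∀ i, 0 < 1 + 2*β*(ev i) - (ev i)^2 := by
    intro i
    have key := mul_nonneg (sub_nonneg.mpr (hevub i))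
      (mul_pos (hevpos i) hμmaxpos).le
    nlinarith [h4, key, hevpos i, hμmaxpos, hevub i]
  -- linear combination lemma
  have hlin : ∀ a b : ℝ, a • W + b • T
      = R * U * diagonal (fun i => a + b * ev i) * star U * R := by
    intro a b
    have hd : (diagonal (fun i => a + b * ev i) : Matrix (Fin n) (Fin n) ℝ)
        = a • (1 : Matrix (Fin n) (Fin n) ℝ) + b • diagonal ev := by
      ext i j
      rcases eq_or_ne i j with h | h
      · subst h
        simp [Matrix.diagonal_apply_eq]
      · simp [Matrix.diagonal_apply_ne _ h, Matrix.one_apply_ne h]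
    rw [hd]
    simp only [Matrix.mul_add, Matrix.add_mul, Matrix.mul_smul, Matrix.smul_mul, mul_one]
    rw [← hWeq]
    congr 1
    rw [← hTeq]
  -- inverse of conjugated diagonal
  have hinv : ∀ g : Fin n → ℝ, (∀ i, g i ≠ 0) →
      (R * U * diagonal g * star U * R)⁻¹
        = R⁻¹ * U * diagonal (fun i => (g i)⁻¹) * star U * R⁻¹ := by
    intro g hg
    have hUinv : U⁻¹ = star U := inv_eq_left_inv hU2
    have hsUinv : (star U)⁻¹ = U := inv_eq_left_inv hU1
    have hdg : (diagonal g)⁻¹ = diagonal (fun i => (g i)⁻¹) := by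
      apply Matrix.inv_eq_right_inv
      rw [diagonal_mul_diagonal]
      rw [show (fun i => g i * (g i)⁻¹) = (fun _ => (1:ℝ)) from
        funext fun i => mul_inv_cancel₀ (hg i)]
      exact Matrix.diagonal_one
    rw [Matrix.mul_inv_rev, Matrix.mul_inv_rev, Matrix.mul_inv_rev, Matrix.mul_inv_rev,
      hUinv, hsUinv, hdg]
    simp only [Matrix.mul_assoc]
  -- cancellation helpers
  have cRi : ∀ X : Matrix (Fin n) (Fin n) ℝ, R⁻¹ * (R * X) = X := fun X => by
    rw [← Matrix.mul_assoc, hRi, one_mul]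
  have cRi' : ∀ X : Matrix (Fin n) (Fin n) ℝ, R * (R⁻¹ * X) = X := fun X => by
    rw [← Matrix.mul_assoc, hRi', one_mul]
  have cU : ∀ X : Matrix (Fin n) (Fin n) ℝ, U * (star U * X) = X := fun X => by
    rw [← Matrix.mul_assoc, hU1, one_mul]
  have cU' : ∀ X : Matrix (Fin n) (Fin n) ℝ, star U * (U * X) = X := fun X => by
    rw [← Matrix.mul_assoc, hU2, one_mul]
  have dmul : ∀ (a b : Fin n → ℝ) (X : Matrix (Fin n) (Fin n) ℝ),
      diagonal a * (diagonal b * X) = diagonal (fun i => a i * b i) * X := fun a b X => by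
    rw [← Matrix.mul_assoc, diagonal_mul_diagonal]
  -- the four factors
  have e1 : W + β • T = R * U * diagonal (fun i => 1 + β * ev i) * star U * R := by
    have h := hlin 1 β; simpa using h
  have e2 : T - β • W = R * U * diagonal (fun i => -β + 1 * ev i) * star U * R := by
    have h := hlin (-β) 1
    calc T - β • W = (-β) • W + (1:ℝ) • T := by
          rw [one_smul, neg_smul, sub_eq_neg_add]
      _ = _ := h
  have e3 : α • W + T = R * U * diagonal (fun i => α + 1 * ev i) * star U * R := by
    have h := hlin α 1; simpa using h
  have e4 : W - α • T = R * U * diagonal (fun i => 1 + (-α) * ev i) * star U * R := by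
    have h := hlin 1 (-α)
    calc W - α • T = (1:ℝ) • W + (-α) • T := by
          rw [one_smul, neg_smul, sub_eq_add_neg]
      _ = _ := h
  have hg1 : ∀ i, (1 + β * ev i) ≠ 0 := fun i => by
    have := mul_pos hβ (hevpos i); positivity
  have hg3 : ∀ i, (α + 1 * ev i) ≠ 0 := fun i => by
    have h := hevpos i
    have : 0 < α + 1 * ev i := by linarith
    exact ne_of_gt this
  set f : Fin n → ℝ :=
    fun i => (1 + β * ev i)⁻¹ * ((ev i - β) * ((α + ev i)⁻¹ * (1 - α * ev i))) with hfdef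
  have hG : (W + β • T)⁻¹ * (T - β • W) * (α • W + T)⁻¹ * (W - α • T)
      = (R⁻¹ * U) * diagonal f * (star U * R) := by
    rw [e1, e2, e3, e4, hinv _ hg1, hinv _ hg3]
    simp only [Matrix.mul_assoc, cRi, cRi', cU, cU', dmul]
    congr 2
    congr 1
    exact congrArg diagonal (funext fun i => by ring)
  -- pass to ℂ
  have hPP' : (R⁻¹ * U) * (star U * R) = 1 := by
    calc (R⁻¹ * U) * (star U * R) = R⁻¹ * (U * (star U * R)) := by
          simp only [Matrix.mul_assoc]
      _ = R⁻¹ * R := by rw [cU]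
      _ = 1 := hRi
  have hP'P : (star U * R) * (R⁻¹ * U) = 1 := by
    calc (star U * R) * (R⁻¹ * U) = star U * (R * (R⁻¹ * U)) := by
          simp only [Matrix.mul_assoc]
      _ = star U * U := by rw [cRi']
      _ = 1 := hU2
  have hmapmul : ∀ A B : Matrix (Fin n) (Fin n) ℝ,
      ((A * B).map Complex.ofReal) = A.map Complex.ofReal * B.map Complex.ofReal :=
    fun A B => Matrix.map_mul (f := Complex.ofRealHom)
  have hmapone : ((1 : Matrix (Fin n) (Fin n) ℝ).map Complex.ofReal) = 1 :=
    Matrix.map_one _ Complex.ofReal_zero Complex.ofReal_one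
  set u : (Matrix (Fin n) (Fin n) ℂ)ˣ :=
    ⟨(R⁻¹ * U).map Complex.ofReal, (star U * R).map Complex.ofReal,
      by rw [← hmapmul, hPP', hmapone], by rw [← hmapmul, hP'P, hmapone]⟩ with hudef
  have hGc : (((W + β • T)⁻¹ * (T - β • W) * (α • W + T)⁻¹ * (W - α • T)).map Complex.ofReal)
      = (u : Matrix (Fin n) (Fin n) ℂ) * diagonal (fun i => (f i : ℂ))
        * ((u⁻¹ : (Matrix (Fin n) (Fin n) ℂ)ˣ) : Matrix (Fin n) (Fin n) ℂ) := by
    rw [hG, hmapmul, hmapmul]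
    rw [Matrix.diagonal_map Complex.ofReal_zero]
    rfl
  have hspec : spectrum ℂ
      (((W + β • T)⁻¹ * (T - β • W) * (α • W + T)⁻¹ * (W - α • T)).map Complex.ofReal)
      = Set.range (fun i => (f i : ℂ)) := by
    rw [hGc, spectrum.units_conjugate, spectrum_diagonal]
  have hb : ∀ i, ‖(f i : ℂ)‖₊ < 1 := by
    intro i
    have habs : |f i| < 1 := by
      have h := abs_key_lt_one (ev i) α β (hevpos i) hα hβ (hp i) (hq i)
      have heqf : f i = (1 + β * ev i)⁻¹ * (ev i - β) * (α + ev i)⁻¹ * (1 - α * ev i) := by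
        rw [hfdef]; ring
      rw [heqf]; exact h
    have hnorm : ‖(f i : ℂ)‖₊ = ‖f i‖₊ := by
      simp [Complex.nnnorm_real]
    rw [hnorm, ← NNReal.coe_lt_coe]
    simpa [Real.norm_eq_abs] using habs
  unfold spectralRadius
  rw [hspec]
  set c : NNReal := Finset.univ.sup (fun i => ‖(f i : ℂ)‖₊) with hcdef
  have hle : (⨆ k ∈ Set.range (fun i => (f i : ℂ)), (‖k‖₊ : ENNReal)) ≤ (c : ENNReal) := by
    refine iSup₂_le ?_
    rintro k ⟨i, rfl⟩
    refine ENNReal.coe_le_coe.mpr ?_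
    exact Finset.le_sup (f := fun j => ‖(f j : ℂ)‖₊) (Finset.mem_univ i)
  refine lt_of_le_of_lt hle ?_
  rw [ENNReal.coe_lt_one_iff]
  rw [hcdef]
  refine (Finset.sup_lt_iff ?_).mpr (fun i _ => hb i)
  exact zero_lt_one
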